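/- Strong soundness: if X ⊢ φ in the awareness proof system, then for every epistemic model, every world w, and every agent a present in w, if w,a ⊨ χ for all χ ∈ X then w,a ⊨ φ. -/

import Mathlib

/-- Formulas of the awareness logic: propositional variables, ¬, →, and
modalities K (knows about herself), R (de re aware), D (de dicto aware). -/
inductive Formula : Type
  | var : ℕ → Formula
  | neg : Formula → Formula
  | imp : Formula → Formula → Formula
  | K : Formula → Formula
  | R : Formula → Formula
  | D : Formula → Formula
deriving DecidableEq

/-- Truth constant ⊤, defined in the standard way. -/
def fTop : Formula := (Formula.var 0).imp (Formula.var 0)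

/-- False constant ⊥, defined in the standard way. -/
def fBot : Formula := fTop.neg

/-- Disjunction, defined in the standard way from ¬ and →. -/
def fOr (φ ψ : Formula) : Formula := φ.neg.imp ψ

/-- An epistemic model (W, 𝒜, P, ∼, π): presence relation P ⊆ 𝒜 × W,
indistinguishability ∼ₐ an equivalence relation on Pₐ = {w | a P w},
and π(p) ⊆ P. -/
structure EpistemicModel where
  W : Type
  A : Type
  P : A → W → Prop
  indist : A → W → W → Prop
  indist_left : ∀ a w u, indist a w u → P a w
  indist_right : ∀ a w u, indist a w u → P a u
  indist_refl : ∀ a w, P a w → indist a w w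
  indist_symm : ∀ a w u, indist a w u → indist a u w
  indist_trans : ∀ a w u v, indist a w u → indist a u v → indist a w v
  pi : ℕ → A → W → Prop
  pi_sub : ∀ p a w, pi p a w → P a w

/-- The satisfaction relation w,a ⊨ φ. -/
def Sat (M : EpistemicModel) : Formula → M.W → M.A → Prop
  | .var p, w, a => M.pi p a w
  | .neg φ, w, a => ¬ Sat M φ w a
  | .imp φ ψ, w, a => Sat M φ w a → Sat M ψ w a
  | .K φ, w, a => ∀ u, M.P a u → M.indist a w u → Sat M φ u a
  | .R φ, w, a => ∃ b, M.P b w ∧ Sat M φ w b ∧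
      (∀ u, M.P a u → M.indist a w u → M.P b u)
  | .D φ, w, a => ∀ u, M.P a u → M.indist a w u →
      ∃ b, M.P b u ∧ Sat M φ u b

/-- Validity: true at every world-agent pair (with the agent present)
of every epistemic model. -/
def Valid (φ : Formula) : Prop :=
  ∀ (M : EpistemicModel) (w : M.W) (a : M.A), M.P a w → Sat M φ w a

/-- Propositional tautology: true under every boolean valuation of formulas
that respects ¬ and →. -/
def IsTaut (φ : Formula) : Prop :=
  ∀ v : Formula → Bool,
    (∀ ψ, v ψ.neg = !(v ψ)) →
    (∀ ψ χ, v (ψ.imp χ) = (!(v ψ) || v χ)) →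
    v φ = true

/-- Theorems of the awareness proof system. -/
inductive Thm : Formula → Prop
  | taut {φ : Formula} : IsTaut φ → Thm φ
  | truth (φ : Formula) : Thm ((Formula.K φ).imp φ)
  | negIntro (φ : Formula) : Thm ((Formula.K φ).neg.imp (Formula.K (Formula.K φ).neg))
  | distr (φ ψ : Formula) : Thm ((Formula.K (φ.imp ψ)).imp ((Formula.K φ).imp (Formula.K ψ)))
  | selfAwareR (φ : Formula) : Thm (φ.imp (Formula.R φ))
  | selfAwareD (φ : Formula) : Thm ((Formula.K φ).imp (Formula.D φ))
  | introAware (φ : Formula) : Thm ((Formula.D φ).imp (Formula.K (Formula.D φ)))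
  | unawareR : Thm (Formula.R fBot).neg
  | unawareD : Thm (Formula.D fBot).neg
  | disjunct (φ ψ : Formula) : Thm ((Formula.R (fOr φ ψ)).imp (fOr (Formula.R φ) (Formula.R ψ)))
  | genAware (φ : Formula) : Thm ((Formula.D (fOr (Formula.R φ) (Formula.D φ))).imp (Formula.D φ))
  | mp {φ ψ : Formula} : Thm (φ.imp ψ) → Thm φ → Thm ψ
  | nec {φ : Formula} : Thm φ → Thm (Formula.K φ)
  | monoD {φ ψ : Formula} : Thm (φ.imp ψ) → Thm ((Formula.D φ).imp (Formula.D ψ))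
  | monoR {φ ψ : Formula} : Thm (φ.imp ψ) → Thm ((Formula.R φ).imp (Formula.R ψ))

/-- X ⊢ φ: derivable from theorems and X using only Modus Ponens. -/
inductive Deriv (X : Set Formula) : Formula → Prop
  | thm {φ : Formula} : Thm φ → Deriv X φ
  | hyp {φ : Formula} : φ ∈ X → Deriv X φ
  | mp {φ ψ : Formula} : Deriv X (φ.imp ψ) → Deriv X φ → Deriv X ψ

/-- X is consistent if X ⊬ ⊥. -/
def Consistent (X : Set Formula) : Prop := ¬ Deriv X fBot

/-- Maximal consistent set. -/
def MaxConsistent (X : Set Formula) : Prop :=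
  Consistent X ∧ ∀ φ : Formula, φ ∈ X ∨ φ.neg ∈ X

/-- General awareness modality Aχ := Rχ ∨ Dχ. -/
def fA (φ : Formula) : Formula := fOr (Formula.R φ) (Formula.D φ)

/-- n-fold application of A. -/
def fAn : ℕ → Formula → Formula
  | 0, φ => φ
  | n + 1, φ => fA (fAn n φ)

/-- X is λ-assured if X ⊬ Aⁿ¬λ for every n ≥ 0. -/
def Assured (l : Formula) (X : Set Formula) : Prop :=
  ∀ n : ℕ, ¬ Deriv X (fAn n l.neg)

lemma sat_fBot_iff (M : EpistemicModel) (w : M.W) (b : M.A) : ¬ Sat M fBot w b := by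
  simp [fBot, fTop, Sat]

lemma thm_valid {φ : Formula} (h : Thm φ) : Valid φ := by
  induction h with
  | @taut φ ht =>
    intro M w a ha
    classical
    have key : ∀ ψ : Formula, (decide (Sat M ψ w a) = true) ↔ Sat M ψ w a := by
      intro ψ; exact decide_eq_true_iff
    have := ht (fun ψ => decide (Sat M ψ w a))
      (by intro ψ; by_cases h1 : Sat M ψ w a <;> simp [Sat, h1])
      (by
        intro ψ χ
        by_cases h1 : Sat M ψ w a <;> by_cases h2 : Sat M χ w a <;>
          simp [Sat, h1, h2])
    exact (key φ).mp this
  | truth φ =>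
    intro M w a ha hK
    exact hK w ha (M.indist_refl a w ha)
  | negIntro φ =>
    intro M w a ha hn u hu hwu hK
    apply hn
    intro v hv hwv
    exact hK v hv (M.indist_trans a u w v (M.indist_symm a w u hwu) hwv)
  | distr φ ψ =>
    intro M w a ha h1 h2 u hu hwu
    exact h1 u hu hwu (h2 u hu hwu)
  | selfAwareR φ =>
    intro M w a ha hφ
    exact ⟨a, ha, hφ, fun u hu _ => hu⟩
  | selfAwareD φ =>
    intro M w a ha hK u hu hwu
    exact ⟨a, hu, hK u hu hwu⟩
  | introAware φ =>
    intro M w a ha hD u hu hwu v hv huv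
    exact hD v hv (M.indist_trans a w u v hwu huv)
  | unawareR =>
    intro M w a ha h
    obtain ⟨b, _, hb, _⟩ := h
    exact sat_fBot_iff M w b hb
  | unawareD =>
    intro M w a ha h
    obtain ⟨b, _, hb⟩ := h w ha (M.indist_refl a w ha)
    exact sat_fBot_iff M w b hb
  | disjunct φ ψ =>
    intro M w a ha h hnR
    classical
    obtain ⟨b, hbw, hor, hcov⟩ := h
    by_cases hφ : Sat M φ w b
    · exact absurd ⟨b, hbw, hφ, hcov⟩ hnR
    · exact ⟨b, hbw, hor hφ, hcov⟩
  | genAware φ =>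
    intro M w a ha h u hu hwu
    classical
    obtain ⟨b, hbu, hor⟩ := h u hu hwu
    by_cases hR : Sat M (Formula.R φ) u b
    · obtain ⟨c, hcu, hc, _⟩ := hR
      exact ⟨c, hcu, hc⟩
    · exact (hor hR) u hbu (M.indist_refl b u hbu)
  | mp _ _ ih1 ih2 =>
    intro M w a ha
    exact ih1 M w a ha (ih2 M w a ha)
  | nec _ ih =>
    intro M w a ha u hu _
    exact ih M u a hu
  | monoD _ ih =>
    intro M w a ha hD u hu hwu
    obtain ⟨b, hbu, hb⟩ := hD u hu hwu
    exact ⟨b, hbu, ih M u b hbu hb⟩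
  | monoR _ ih =>
    intro M w a ha hR
    obtain ⟨b, hbw, hb, hcov⟩ := hR
    exact ⟨b, hbw, ih M w b hbw hb, hcov⟩

theorem strong_soundness (X : Set Formula) (φ : Formula) (h : Deriv X φ)
    (M : EpistemicModel) (w : M.W) (a : M.A) (ha : M.P a w)
    (hX : ∀ χ ∈ X, Sat M χ w a) : Sat M φ w a := by
  induction h with
  | thm ht => exact thm_valid ht M w a ha
  | hyp hm => exact hX _ hm
  | mp _ _ ih1 ih2 => exact ih1 (ih2)
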